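/- Let $E_1(\mu) = \frac{1}{2}\iint \Lambda(x,y)\, d\mu(x) d\mu(y)$ and $E_\alpha(\mu) = \frac{1}{2}\iint \Lambda(x,y)^\alpha\, d\mu(x) d\mu(y)$ with $\Lambda(x,y) = \frac{2}{\pi}\min\{\arccos(x\cdot y), \pi - \arccos(x\cdot y)\}$. Fix $\alpha > 1$ and $N \in \mathbb{N}$. Suppose $\mu = \frac{1}{N}\sum_{i=1}^N \delta_{x_i}$ maximizes $E_1$ among uniform $N$-point measures on $S^d$ and all $x_i \cdot x_j \in \{0, 1, -1\}$. If $\nu = \frac{1}{N}\sum_{i=1}^N \delta_{y_i}$ maximizes $E_\alpha$ among uniform $N$-point measures, then $y_i \cdot y_j \in \{0, 1, -1\}$ for all $i, j$. -/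

import Mathlib

open scoped RealInnerProductSpace

/-- The `α`-energy of the uniform measure on the `N` points `x 0, ..., x (N-1)` of the
sphere, with kernel the `α`-th power of the renormalized angle `Λ`. -/
noncomputable def energy (d N : ℕ) (α : ℝ)
    (x : Fin N → EuclideanSpace ℝ (Fin (d + 1))) : ℝ :=
  1 / (2 * (N : ℝ) ^ 2) * ∑ i, ∑ j,
    (2 / Real.pi * min (Real.arccos ⟪x i, x j⟫) (Real.pi - Real.arccos ⟪x i, x j⟫)) ^ α

noncomputable def Lam (t : ℝ) : ℝ :=
  2 / Real.pi * min (Real.arccos t) (Real.pi - Real.arccos t)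

lemma Lam_nonneg (t : ℝ) : 0 ≤ Lam t := by
  have h1 := Real.arccos_nonneg t
  have h2 := Real.arccos_le_pi t
  have hπ := Real.pi_pos
  exact mul_nonneg (by positivity) (le_min h1 (by linarith))

lemma Lam_le_one (t : ℝ) : Lam t ≤ 1 := by
  have h1 := Real.arccos_nonneg t
  have h2 := Real.arccos_le_pi t
  have hπ := Real.pi_pos
  have hmin : min (Real.arccos t) (Real.pi - Real.arccos t) ≤ Real.pi / 2 := by
    rcases le_total (Real.arccos t) (Real.pi / 2) with h | h
    · exact le_trans (min_le_left _ _) h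
    · exact le_trans (min_le_right _ _) (by linarith)
  calc Lam t ≤ 2 / Real.pi * (Real.pi / 2) :=
        mul_le_mul_of_nonneg_left hmin (by positivity)
    _ = 1 := by field_simp

lemma rpow_le_self_of {u α : ℝ} (h0 : 0 ≤ u) (h1 : u ≤ 1) (hα : 1 < α) : u ^ α ≤ u := by
  rcases eq_or_lt_of_le h0 with h | h
  · rw [← h, Real.zero_rpow (by linarith)]
  · calc u ^ α ≤ u ^ (1 : ℝ) := Real.rpow_le_rpow_of_exponent_ge h h1 hα.le
      _ = u := Real.rpow_one u

lemma eq_zero_or_one_of_rpow_eq {u α : ℝ} (h0 : 0 ≤ u) (h1 : u ≤ 1) (hα : 1 < α)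
    (heq : u ^ α = u) : u = 0 ∨ u = 1 := by
  by_contra h
  push_neg at h
  have hu0 : 0 < u := lt_of_le_of_ne h0 (Ne.symm h.1)
  have hu1 : u < 1 := lt_of_le_of_ne h1 h.2
  have : u ^ α < u ^ (1 : ℝ) := Real.rpow_lt_rpow_of_exponent_gt hu0 hu1 hα
  rw [Real.rpow_one, heq] at this
  exact lt_irrefl u this

lemma Lam_mem {t : ℝ} (ht1 : -1 ≤ t) (ht2 : t ≤ 1) (h : Lam t = 0 ∨ Lam t = 1) :
    t ∈ ({0, 1, -1} : Set ℝ) := by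
  have hπ := Real.pi_pos
  have h1 := Real.arccos_nonneg t
  have h2 := Real.arccos_le_pi t
  have hct := Real.cos_arccos ht1 ht2
  simp only [Set.mem_insert_iff, Set.mem_singleton_iff]
  rcases h with h | h
  · have hmin : min (Real.arccos t) (Real.pi - Real.arccos t) = 0 := by
      have h2π : (2 : ℝ) / Real.pi ≠ 0 := by positivity
      exact (mul_eq_zero.mp h).resolve_left h2π
    rcases min_eq_iff.mp hmin with ⟨ha, _⟩ | ⟨ha, _⟩
    · right; left
      rw [← hct, ha, Real.cos_zero]
    · have : Real.arccos t = Real.pi := by linarith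
      right; right
      rw [← hct, this, Real.cos_pi]
  · have hmin : min (Real.arccos t) (Real.pi - Real.arccos t) = Real.pi / 2 := by
      have : (2 / Real.pi) * min (Real.arccos t) (Real.pi - Real.arccos t)
          = (2 / Real.pi) * (Real.pi / 2) := by
        rw [show 2 / Real.pi * (Real.arccos t ⊓ (Real.pi - Real.arccos t)) = Lam t from rfl, h]
        field_simp
      exact mul_left_cancel₀ (by positivity) this
    have ha : Real.arccos t = Real.pi / 2 := by
      have l1 : Real.pi / 2 ≤ Real.arccos t := hmin ▸ min_le_left _ _
      have l2 : Real.pi / 2 ≤ Real.pi - Real.arccos t := hmin ▸ min_le_right _ _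
      linarith
    left
    rw [← hct, ha, Real.cos_pi_div_two]

lemma Lam_zero : Lam 0 = 1 := by
  have hπ := Real.pi_pos
  unfold Lam
  rw [Real.arccos_zero, show Real.pi - Real.pi / 2 = Real.pi / 2 by ring, min_self]
  field_simp

lemma Lam_one : Lam 1 = 0 := by
  have hπ := Real.pi_pos
  unfold Lam
  rw [Real.arccos_one, min_eq_left (by linarith : (0:ℝ) ≤ Real.pi - 0), mul_zero]

lemma Lam_neg_one : Lam (-1) = 0 := by
  unfold Lam
  rw [Real.arccos_neg_one, sub_self, min_eq_right Real.pi_pos.le, mul_zero]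

theorem stmt16 (d N : ℕ) (α : ℝ) (hα : 1 < α)
    (x y : Fin N → EuclideanSpace ℝ (Fin (d + 1)))
    (hx : ∀ i, ‖x i‖ = 1)
    (hxmax : ∀ z : Fin N → EuclideanSpace ℝ (Fin (d + 1)), (∀ i, ‖z i‖ = 1) →
      energy d N 1 z ≤ energy d N 1 x)
    (hxorth : ∀ i j, ⟪x i, x j⟫ ∈ ({0, 1, -1} : Set ℝ))
    (hy : ∀ i, ‖y i‖ = 1)
    (hymax : ∀ z : Fin N → EuclideanSpace ℝ (Fin (d + 1)), (∀ i, ‖z i‖ = 1) →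
      energy d N α z ≤ energy d N α y) :
    ∀ i j, ⟪y i, y j⟫ ∈ ({0, 1, -1} : Set ℝ) := by
  rcases Nat.eq_zero_or_pos N with hN | hN
  · subst hN; intro i; exact i.elim0
  intro i j
  have hbd : ∀ a b, -1 ≤ ⟪y a, y b⟫ ∧ ⟪y a, y b⟫ ≤ 1 := by
    intro a b
    have h := abs_real_inner_le_norm (y a) (y b)
    rw [hy a, hy b, one_mul] at h
    exact ⟨by linarith [neg_abs_le ⟪y a, y b⟫], by linarith [le_abs_self ⟪y a, y b⟫]⟩
  have hE : ∀ (β : ℝ) (z : Fin N → EuclideanSpace ℝ (Fin (d + 1))),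
      energy d N β z = 1 / (2 * (N : ℝ) ^ 2) * ∑ a, ∑ b, (Lam ⟪z a, z b⟫) ^ β :=
    fun _ _ => rfl
  have hxeq : energy d N α x = energy d N 1 x := by
    rw [hE, hE]
    congr 1
    refine Finset.sum_congr rfl fun a _ => Finset.sum_congr rfl fun b _ => ?_
    have h := hxorth a b
    simp only [Set.mem_insert_iff, Set.mem_singleton_iff] at h
    rcases h with h | h | h <;> rw [h] <;>
      simp [Lam_zero, Lam_one, Lam_neg_one, Real.zero_rpow (show α ≠ 0 by linarith),
        Real.zero_rpow (show (1:ℝ) ≠ 0 by norm_num)]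
  have h3 : energy d N α y ≤ energy d N 1 y := by
    rw [hE, hE]
    refine mul_le_mul_of_nonneg_left ?_ (by positivity)
    refine Finset.sum_le_sum fun a _ => Finset.sum_le_sum fun b _ => ?_
    rw [Real.rpow_one]
    exact rpow_le_self_of (Lam_nonneg _) (Lam_le_one _) hα
  have h1 := hymax x hx
  have h2 := hxmax y hy
  have heq : energy d N α y = energy d N 1 y := le_antisymm h3 (by linarith)
  rw [hE, hE] at heq
  have hNpos : (0:ℝ) < N := Nat.cast_pos.mpr hN
  have hc : (0:ℝ) < 1 / (2 * (N : ℝ) ^ 2) := by positivity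
  have hsums : ∑ a, ∑ b, (Lam ⟪y a, y b⟫) ^ α = ∑ a, ∑ b, (Lam ⟪y a, y b⟫) ^ (1:ℝ) :=
    mul_left_cancel₀ hc.ne' heq
  have hnn : ∀ a b, 0 ≤ (Lam ⟪y a, y b⟫) ^ (1:ℝ) - (Lam ⟪y a, y b⟫) ^ α := by
    intro a b
    rw [Real.rpow_one]
    linarith [rpow_le_self_of (Lam_nonneg ⟪y a, y b⟫) (Lam_le_one ⟪y a, y b⟫) hα]
  have hz : ∑ a, ∑ b, ((Lam ⟪y a, y b⟫) ^ (1:ℝ) - (Lam ⟪y a, y b⟫) ^ α) = 0 := by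
    rw [Finset.sum_congr rfl fun a _ => Finset.sum_sub_distrib _ _, Finset.sum_sub_distrib,
      hsums, sub_self]
  have hrow := (Finset.sum_eq_zero_iff_of_nonneg
    (fun a _ => Finset.sum_nonneg fun b _ => hnn a b)).mp hz i (Finset.mem_univ i)
  have hterm := (Finset.sum_eq_zero_iff_of_nonneg (fun b _ => hnn i b)).mp hrow j
    (Finset.mem_univ j)
  rw [Real.rpow_one] at hterm
  have heq' : (Lam ⟪y i, y j⟫) ^ α = Lam ⟪y i, y j⟫ := by linarith
  obtain ⟨hb1, hb2⟩ := hbd i j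
  exact Lam_mem hb1 hb2 (eq_zero_or_one_of_rpow_eq (Lam_nonneg _) (Lam_le_one _) hα heq')
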